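/- Let F be a field and m ≥ 2. An m×m matrix C over F[X] satisfies (i) there exists an m×m matrix E over F[X] with C·E = I_m and (ii) the entrywise evaluation of C at X = 1 equals I_m, if and only if there exist r ∈ ℕ, data (i_s, j_s, a_s, k_s) for s = 1, …, r with i_s ≠ j_s, a_s ∈ F nonzero, k_s ∈ ℕ, and a constant diagonal m×m matrix C′ over F with det(C′) = 1, such that C = E_r · E_{r−1} ⋯ E_1 · C′, where E_s = I_m + a_s·E_{i_s j_s} when k_s = 0 and E_s = I_m − a_s·E_{i_s j_s} + a_s·E_{i_s j_s}·X^{k_s} when k_s ≥ 1, and moreover the product (taken in the same relative order) of those factors E_s having k_s = 0, multiplied on the right by C′, equals I_m. -/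

import Mathlib

open Polynomial Matrix

set_option linter.unusedSectionVars false
set_option linter.unusedVariables false

section General
variable {R : Type*} [CommRing R] {n : Type*} [DecidableEq n] [Fintype n]

lemma LS_std_mul_zero {i j k l : n} (h : j ≠ k) (a b : R) :
    single i j a * single k l b = 0 :=
  Matrix.single_mul_single_of_ne _ _ _ _ h _

lemma LS_unit_pair {i j : n} (h : i ≠ j) (p : R) :
    (1 + single i j p) * (1 - single i j p) = 1 := by
  have h2 : single i j p * single i j p = 0 :=
    LS_std_mul_zero (Ne.symm h) p p
  have : (1 + single i j p) * (1 - single i j p)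
      = 1 - single i j p * single i j p := by noncomm_ring
  rw [this, h2, sub_zero]

lemma LS_unit_pair' {i j : n} (h : i ≠ j) (p : R) :
    (1 - single i j p) * (1 + single i j p) = 1 := by
  have h2 : single i j p * single i j p = 0 :=
    LS_std_mul_zero (Ne.symm h) p p
  have : (1 - single i j p) * (1 + single i j p)
      = 1 - single i j p * single i j p := by noncomm_ring
  rw [this, h2, sub_zero]

lemma LS_isUnit_trans {i j : n} (h : i ≠ j) (p : R) :
    IsUnit (1 + single i j p) :=
  ⟨⟨_, 1 - single i j p, LS_unit_pair h p, LS_unit_pair' h p⟩, rfl⟩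

lemma LS_trans_mul_trans {i j : n} (h : i ≠ j) (p q : R) :
    (1 + single i j p) * (1 + single i j q)
      = 1 + single i j (p + q) := by
  have h2 : single i j p * single i j q = 0 :=
    LS_std_mul_zero (Ne.symm h) p q
  have : (1 + single i j p) * (1 + single i j q)
      = 1 + (single i j p + single i j q)
        + single i j p * single i j q := by noncomm_ring
  rw [this, h2, add_zero, single_add]

/-- products of row-transvections with common row index -/
lemma LS_prod_one_add (i₀ : n) (g : n → R) :
    ∀ (s : Finset n), (∀ i ∈ s, i ≠ i₀) →
    ∃ l : List (Matrix n n R),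
      (∀ M ∈ l, ∃ i j p, i ≠ j ∧ M = 1 + single i j p) ∧
      l.prod = 1 + ∑ i ∈ s, single i₀ i (g i) := by
  intro s
  induction s using Finset.induction_on with
  | empty => exact fun _ => ⟨[], by simp, by simp⟩
  | @insert a s ha IH =>
    intro hs
    obtain ⟨l, hl, hlp⟩ := IH (fun i hi => hs i (Finset.mem_insert_of_mem hi))
    have hai₀ : a ≠ i₀ := hs a (Finset.mem_insert_self a s)
    refine ⟨(1 + single i₀ a (g a)) :: l, ?_, ?_⟩
    · intro M hM
      rcases List.mem_cons.mp hM with rfl | hM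
      · exact ⟨i₀, a, g a, Ne.symm hai₀, rfl⟩
      · exact hl M hM
    · rw [List.prod_cons, hlp, Finset.sum_insert ha]
      have h2 : single i₀ a (g a) * (∑ i ∈ s, single i₀ i (g i)) = 0 := by
        rw [Finset.mul_sum]
        refine Finset.sum_eq_zero fun i hi => LS_std_mul_zero (hs a (Finset.mem_insert_self a s)) _ _
      have expand : (1 + single i₀ a (g a)) * (1 + ∑ i ∈ s, single i₀ i (g i))
          = 1 + (single i₀ a (g a) + ∑ i ∈ s, single i₀ i (g i))
            + single i₀ a (g a) * (∑ i ∈ s, single i₀ i (g i)) := by noncomm_ring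
      rw [expand, h2, add_zero, add_comm (single i₀ a (g a))]

end General

section Coeff
variable {F : Type*} [Field F]

lemma LS_coeff_mul {R : Type*} [CommSemiring R] (p q : R[X]) {a b : ℕ}
    (hp : p.natDegree ≤ a) (hq : q.natDegree ≤ b) :
    (p * q).coeff (a + b) = p.coeff a * q.coeff b := by
  rcases lt_or_eq_of_le hp with hp' | hp'
  · rw [coeff_eq_zero_of_natDegree_lt hp', zero_mul,
      coeff_eq_zero_of_natDegree_lt]
    exact lt_of_le_of_lt natDegree_mul_le (by omega)
  · rcases lt_or_eq_of_le hq with hq' | hq'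
    · rw [coeff_eq_zero_of_natDegree_lt hq', mul_zero,
        coeff_eq_zero_of_natDegree_lt]
      exact lt_of_le_of_lt natDegree_mul_le (by omega)
    · subst hp' hq'
      exact coeff_mul_degree_add_degree p q

lemma LS_coeff_prod {R : Type*} [CommSemiring R] {ι : Type*} [DecidableEq ι] (s : Finset ι)
    (f : ι → R[X]) (d : ι → ℕ) (h : ∀ i ∈ s, (f i).natDegree ≤ d i) :
    (∏ i ∈ s, f i).coeff (∑ i ∈ s, d i) = ∏ i ∈ s, (f i).coeff (d i) := by
  induction s using Finset.induction_on with
  | empty => simp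
  | @insert a s ha IH =>
    rw [Finset.prod_insert ha, Finset.sum_insert ha, Finset.prod_insert ha,
      LS_coeff_mul _ _ (h a (Finset.mem_insert_self a s))
        (le_trans (natDegree_prod_le s f) (Finset.sum_le_sum fun i hi =>
          h i (Finset.mem_insert_of_mem hi))),
      IH (fun i hi => h i (Finset.mem_insert_of_mem hi))]

lemma LS_coeff_det {m : ℕ} (C : Matrix (Fin m) (Fin m) F[X]) (r : Fin m → ℕ)
    (h : ∀ i j, (C i j).natDegree ≤ r i) :
    (C.det).coeff (∑ i, r i) =
      (Matrix.of fun i j => (C i j).coeff (r i)).det := by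
  rw [Matrix.det_apply, Matrix.det_apply, finset_sum_coeff]
  refine Finset.sum_congr rfl fun σ _ => ?_
  rw [coeff_smul]
  congr 1
  have hsum : (∑ i, r i) = ∑ i, r (σ i) := (Equiv.sum_comp σ r).symm
  rw [hsum, LS_coeff_prod _ _ _ (fun i _ => h (σ i) i)]
  rfl

end Coeff

section Diag
variable {F : Type*} [Field F] {n : Type*} [DecidableEq n] [Fintype n]

lemma LS_diag_mul_std (d : n → F) (i j : n) (c : F) (hdj : d j ≠ 0) :
    Matrix.diagonal d * single i j c
      = single i j (d i * c * (d j)⁻¹) * Matrix.diagonal d := by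
  ext a b
  rw [Matrix.diagonal_mul, Matrix.mul_diagonal]
  by_cases hab : i = a ∧ j = b
  · obtain ⟨rfl, rfl⟩ := hab
    simp [mul_assoc, inv_mul_cancel₀ hdj]
  · rw [single_apply_of_ne (h := hab), single_apply_of_ne (h := hab),
      mul_zero, zero_mul]

lemma LS_diag_mul_trans (d : n → F) (hd : ∀ i, d i ≠ 0) {i j : n} (c : F) :
    Matrix.diagonal d * (1 + single i j c)
      = (1 + single i j (d i * c * (d j)⁻¹)) * Matrix.diagonal d := by
  rw [mul_add, add_mul, mul_one, one_mul, LS_diag_mul_std d i j c (hd j)]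

lemma LS_diag_mul_list (d : n → F) (hd : ∀ i, d i ≠ 0) :
    ∀ (l : List (Matrix n n F)),
      (∀ M ∈ l, ∃ i j p, i ≠ j ∧ M = 1 + single i j p) →
      ∃ l' : List (Matrix n n F),
        (∀ M ∈ l', ∃ i j p, i ≠ j ∧ M = 1 + single i j p) ∧
        Matrix.diagonal d * l.prod = l'.prod * Matrix.diagonal d := by
  intro l
  induction l with
  | nil => exact fun _ => ⟨[], by simp, by simp⟩
  | cons M l IH =>
    intro hl
    obtain ⟨l', hl', hl'p⟩ := IH (fun M hM => hl M (List.mem_cons_of_mem _ hM))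
    obtain ⟨i, j, p, hij, rfl⟩ := hl _ (List.mem_cons_self)
    refine ⟨(1 + single i j (d i * p * (d j)⁻¹)) :: l', ?_, ?_⟩
    · intro M hM
      rcases List.mem_cons.mp hM with rfl | hM
      · exact ⟨i, j, _, hij, rfl⟩
      · exact hl' M hM
    · rw [List.prod_cons, List.prod_cons, ← Matrix.mul_assoc,
        LS_diag_mul_trans d hd, Matrix.mul_assoc, hl'p, Matrix.mul_assoc]

lemma LS_row_op_ne {R : Type*} [CommRing R] (i₀ : n) (c : n → R)
    (C : Matrix n n R) {a : n} (ha : a ≠ i₀) (b : n) :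
    (((1 : Matrix n n R) + ∑ i ∈ Finset.univ.erase i₀, single i₀ i (c i)) * C) a b
      = C a b := by
  rw [Matrix.add_mul, Matrix.one_mul, Matrix.sum_mul, Matrix.add_apply, Matrix.sum_apply]
  rw [Finset.sum_eq_zero
    (fun i _ => single_mul_apply_of_ne (c := c i) i₀ i a b ha C), add_zero]

lemma LS_row_op_same {R : Type*} [CommRing R] (i₀ : n) (c : n → R) (hc : c i₀ = 1)
    (C : Matrix n n R) (b : n) :
    (((1 : Matrix n n R) + ∑ i ∈ Finset.univ.erase i₀, single i₀ i (c i)) * C) i₀ b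
      = ∑ i, c i * C i b := by
  rw [Matrix.add_mul, Matrix.one_mul, Matrix.sum_mul, Matrix.add_apply, Matrix.sum_apply]
  have : ∀ i ∈ Finset.univ.erase i₀, (single i₀ i (c i) * C) i₀ b = c i * C i b :=
    fun i _ => single_mul_apply_same (c := c i) i₀ i b C
  rw [Finset.sum_congr rfl this]
  have h2 := Finset.add_sum_erase Finset.univ (fun i => c i * C i b) (Finset.mem_univ i₀)
  rw [← h2, hc, one_mul]

end Diag

section ConstCase
variable {F : Type*} [Field F] {n : Type*} [DecidableEq n] [Fintype n]

lemma LS_map_std {R S : Type*} [Semiring R] [Semiring S] (f : R →+* S) (i j : n) (c : R) :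
    (single i j c).map f = single i j (f c) := by
  ext a b
  simp [Matrix.map_apply, single, apply_ite f]

lemma LS_const_case {m : ℕ} (C : Matrix (Fin m) (Fin m) F[X]) (hC : IsUnit C)
    (hconst : ∀ i j, (C i j).natDegree = 0) :
    ∃ (l : List (Matrix (Fin m) (Fin m) F[X])) (d : Fin m → F),
      (∀ M ∈ l, ∃ i j p, i ≠ j ∧ M = 1 + single i j p) ∧
      (∀ i, d i ≠ 0) ∧ C = l.prod * (Matrix.diagonal d).map Polynomial.C := by
  set C₀ : Matrix (Fin m) (Fin m) F := Matrix.of fun i j => (C i j).coeff 0 with hC₀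
  have hCC₀ : C = C₀.map Polynomial.C := by
    refine Matrix.ext fun i j => ?_
    simp only [Matrix.map_apply, hC₀, Matrix.of_apply]
    exact eq_C_of_natDegree_eq_zero (hconst i j)
  have hmap : (RingHom.mapMatrix (evalRingHom (1 : F))) C = C₀ := by
    ext i j
    simp only [RingHom.mapMatrix_apply, Matrix.map_apply, hC₀, Matrix.of_apply, coe_evalRingHom]
    conv_lhs => rw [eq_C_of_natDegree_eq_zero (hconst i j)]
    simp
  have hU0 : IsUnit C₀ := hmap ▸ hC.map (RingHom.mapMatrix (evalRingHom (1 : F)))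
  obtain ⟨L, L', D, hD⟩ := Matrix.Pivot.exists_list_transvec_mul_diagonal_mul_list_transvec C₀
  have hdetD : ∏ i, D i ≠ 0 := by
    have h1 : C₀.det ≠ 0 := (Matrix.isUnit_iff_isUnit_det C₀).mp hU0 |>.ne_zero
    have h2 : C₀.det = ∏ i, D i := by
      rw [hD]; simp [Matrix.det_mul, Matrix.det_diagonal]
    rwa [h2] at h1
  have hDne : ∀ i, D i ≠ 0 := fun i h =>
    hdetD (Finset.prod_eq_zero (Finset.mem_univ i) h)
  have htransL' : ∀ M ∈ L'.map Matrix.TransvectionStruct.toMatrix,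
      ∃ i j p, i ≠ j ∧ M = 1 + single i j p := by
    intro M hM
    obtain ⟨t, _, rfl⟩ := List.mem_map.mp hM
    exact ⟨t.i, t.j, t.c, t.hij, rfl⟩
  obtain ⟨l'', hl'', heq⟩ := LS_diag_mul_list D hDne _ htransL'
  have hC₀eq : C₀ = ((L.map Matrix.TransvectionStruct.toMatrix) ++ l'').prod
      * Matrix.diagonal D := by
    rw [List.prod_append, hD, Matrix.mul_assoc, Matrix.mul_assoc, ← heq, ← Matrix.mul_assoc]
  set ψ : Matrix (Fin m) (Fin m) F →+* Matrix (Fin m) (Fin m) F[X] :=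
    RingHom.mapMatrix (Polynomial.C : F →+* F[X]) with hψ
  refine ⟨((L.map Matrix.TransvectionStruct.toMatrix) ++ l'').map (fun M => M.map Polynomial.C),
    D, ?_, hDne, ?_⟩
  · intro M hM
    obtain ⟨M₀, hM₀, rfl⟩ := List.mem_map.mp hM
    have hM₀' : ∃ i j p, i ≠ j ∧ M₀ = 1 + single i j p := by
      rcases List.mem_append.mp hM₀ with h | h
      · obtain ⟨t, _, rfl⟩ := List.mem_map.mp h
        exact ⟨t.i, t.j, t.c, t.hij, rfl⟩
      · exact hl'' _ h
    obtain ⟨i, j, p, hij, rfl⟩ := hM₀'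
    refine ⟨i, j, Polynomial.C p, hij, ?_⟩
    have : (1 + single i j p).map Polynomial.C = ψ (1 + single i j p) := rfl
    rw [this, _root_.map_add, _root_.map_one, hψ, RingHom.mapMatrix_apply, LS_map_std]
  · have : C = ψ C₀ := by rw [hCC₀]; rfl
    rw [this, hC₀eq, _root_.map_mul, map_list_prod]
    rfl

end ConstCase

section Main
variable {F : Type*} [Field F]

lemma LS_std_neg {n : Type*} [DecidableEq n] {R : Type*} [Ring R] (i j : n) (a : R) :
    single i j (-a) = -(single i j a) := by
  ext a' b'
  simp only [single, Matrix.of_apply, Matrix.neg_apply]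
  split <;> simp



lemma LS_main {m : ℕ} :
    ∀ (N : ℕ) (C : Matrix (Fin m) (Fin m) F[X]), IsUnit C →
    (∑ i, Finset.univ.sup (fun j => (C i j).natDegree)) ≤ N →
    ∃ (l : List (Matrix (Fin m) (Fin m) F[X])) (d : Fin m → F),
      (∀ M ∈ l, ∃ i j p, i ≠ j ∧ M = 1 + single i j p) ∧
      (∀ i, d i ≠ 0) ∧ C = l.prod * (Matrix.diagonal d).map Polynomial.C := by
  intro N
  induction N using Nat.strong_induction_on with
  | _ N IH =>
  intro C hC hN
  classical
  by_cases hconst : ∀ i j, (C i j).natDegree = 0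
  · exact LS_const_case C hC hconst
  push_neg at hconst
  obtain ⟨i₁, j₁, hij₁⟩ := hconst
  set r : Fin m → ℕ := fun i => Finset.univ.sup (fun j => (C i j).natDegree) with hr
  have hrle : ∀ i j, (C i j).natDegree ≤ r i := fun i j => by
    simp only [hr]; exact Finset.le_sup (f := fun j => (C i j).natDegree) (Finset.mem_univ j)
  set L₀ : Matrix (Fin m) (Fin m) F := Matrix.of (fun i j => (C i j).coeff (r i)) with hL₀
  have hrpos : 0 < ∑ i, r i := by
    have h1 : 0 < r i₁ := lt_of_lt_of_le (Nat.pos_of_ne_zero hij₁) (hrle i₁ j₁)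
    exact Finset.sum_pos' (fun i _ => Nat.zero_le _) ⟨i₁, Finset.mem_univ i₁, h1⟩
  have hdet0 : L₀.det = 0 := by
    by_contra hne
    have h1 : (C.det).coeff (∑ i, r i) = L₀.det := LS_coeff_det C r hrle
    have hu : IsUnit C.det := (Matrix.isUnit_iff_isUnit_det C).mp hC
    have h2 : (C.det).natDegree = 0 :=
      natDegree_eq_zero_iff_degree_le_zero.mpr (le_of_eq (isUnit_iff_degree_eq_zero.mp hu))
    have h3 : (C.det).coeff (∑ i, r i) = 0 :=
      coeff_eq_zero_of_natDegree_lt (by omega)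
    rw [h1] at h3
    exact hne h3
  obtain ⟨w, hw0, hwL⟩ := Matrix.exists_vecMul_eq_zero_iff.mpr hdet0
  have hnonempty : (Finset.univ.filter (fun i => w i ≠ 0)).Nonempty := by
    obtain ⟨i, hi⟩ : ∃ i, w i ≠ 0 := by
      by_contra h
      push_neg at h
      exact hw0 (funext h)
    exact ⟨i, Finset.mem_filter.mpr ⟨Finset.mem_univ i, hi⟩⟩
  obtain ⟨i₀, hi₀, hmaxi₀⟩ := Finset.exists_max_image _ r hnonempty
  have hwi₀ : w i₀ ≠ 0 := (Finset.mem_filter.mp hi₀).2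
  have hrmax : ∀ i, w i ≠ 0 → r i ≤ r i₀ := fun i hi =>
    hmaxi₀ i (Finset.mem_filter.mpr ⟨Finset.mem_univ i, hi⟩)
  set c : Fin m → F[X] := fun i => Polynomial.C (w i / w i₀) * X ^ (r i₀ - r i) with hc
  have hci₀ : c i₀ = 1 := by simp [hc, div_self hwi₀]
  set T : Matrix (Fin m) (Fin m) F[X] :=
    ∑ i ∈ Finset.univ.erase i₀, single i₀ i (c i) with hT
  have hTT : T * T = 0 := by
    rw [hT, Finset.sum_mul_sum]
    refine Finset.sum_eq_zero fun i hi => Finset.sum_eq_zero fun i' _ => ?_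
    exact LS_std_mul_zero (Finset.ne_of_mem_erase hi) _ _
  have hWV : (1 + T) * (1 - T) = 1 := by
    have h0 : (1 + T) * (1 - T) = 1 - T * T := by noncomm_ring
    rw [h0, hTT, sub_zero]
  have hVW : (1 - T) * (1 + T) = 1 := by
    have h0 : (1 - T) * (1 + T) = 1 - T * T := by noncomm_ring
    rw [h0, hTT, sub_zero]
  have hUW : IsUnit ((1 : Matrix (Fin m) (Fin m) F[X]) + T) := ⟨⟨_, 1 - T, hWV, hVW⟩, rfl⟩
  set C' := (1 + T) * C with hC'def
  have hUC' : IsUnit C' := hUW.mul hC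
  have hCrow : ∀ (a : Fin m), a ≠ i₀ → ∀ b, C' a b = C a b := fun a ha b =>
    LS_row_op_ne i₀ c C ha b
  have hCrow₀ : ∀ b, C' i₀ b = ∑ i, c i * C i b := fun b => LS_row_op_same i₀ c hci₀ C b
  have hkey : ∀ i b, (c i * C i b).natDegree ≤ r i₀ ∧
      (c i * C i b).coeff (r i₀) = (w i / w i₀) * L₀ i b := by
    intro i b
    by_cases hwi : w i = 0
    · have h0 : c i = 0 := by simp [hc, hwi]
      simp [h0, hwi, hL₀]
    · have hri : r i ≤ r i₀ := hrmax i hwi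
      constructor
      · refine le_trans natDegree_mul_le ?_
        have h1 : (c i).natDegree ≤ r i₀ - r i := by
          rw [hc]
          refine le_trans natDegree_mul_le ?_
          simp
        have h2 := hrle i b
        omega
      · rw [hc]
        rw [mul_assoc, coeff_C_mul, coeff_X_pow_mul', if_pos (Nat.sub_le _ _)]
        have h2 : r i₀ - (r i₀ - r i) = r i := by omega
        rw [h2]
        rfl
  have hrowdeg : ∀ b, (C' i₀ b).natDegree ≤ r i₀ ∧ (C' i₀ b).coeff (r i₀) = 0 := by
    intro b
    rw [hCrow₀ b]
    refine ⟨natDegree_sum_le_of_forall_le _ _ fun i _ => (hkey i b).1, ?_⟩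
    rw [finset_sum_coeff, Finset.sum_congr rfl (fun i _ => (hkey i b).2)]
    have h5 : ∀ i, (w i / w i₀) * L₀ i b = (w i₀)⁻¹ * (w i * L₀ i b) := by
      intro i; rw [div_eq_inv_mul]; ring
    rw [Finset.sum_congr rfl (fun i _ => h5 i), ← Finset.mul_sum]
    have h0 : ∑ i, w i * L₀ i b = 0 := by
      have h6 := congrFun hwL b
      simpa [Matrix.vecMul, dotProduct] using h6
    rw [h0, mul_zero]
  by_cases hr0 : r i₀ = 0
  · exfalso
    have hrow0 : ∀ b, C' i₀ b = 0 := by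
      intro b
      have h1 := (hrowdeg b).1
      have h2 := (hrowdeg b).2
      rw [hr0] at h1 h2
      rw [eq_C_of_natDegree_le_zero h1, h2, map_zero]
    have hdet : C'.det = 0 := Matrix.det_eq_zero_of_row_eq_zero i₀ hrow0
    exact ((Matrix.isUnit_iff_isUnit_det C').mp hUC').ne_zero hdet
  · have hr0' : 1 ≤ r i₀ := Nat.pos_of_ne_zero hr0
    set r' : Fin m → ℕ := fun i => Finset.univ.sup (fun j => (C' i j).natDegree) with hr'
    have hr'₀ : r' i₀ ≤ r i₀ - 1 := by
      refine Finset.sup_le fun b _ => ?_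
      rw [natDegree_le_iff_coeff_eq_zero]
      intro k hk
      rcases eq_or_lt_of_le (show r i₀ ≤ k by omega) with rfl | hlt
      · exact (hrowdeg b).2
      · exact coeff_eq_zero_of_natDegree_lt (lt_of_le_of_lt (hrowdeg b).1 hlt)
    have hr'i : ∀ i, i ≠ i₀ → r' i = r i := by
      intro i hi
      have h7 : (fun j => (C' i j).natDegree) = fun j => (C i j).natDegree :=
        funext fun b => by rw [hCrow i hi b]
      simp only [hr', hr]
      rw [h7]
    have hsum' : (∑ i, r' i) < ∑ i, r i := by
      have e1 := (Finset.add_sum_erase Finset.univ r' (Finset.mem_univ i₀)).symm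
      have e2 := (Finset.add_sum_erase Finset.univ r (Finset.mem_univ i₀)).symm
      have e3 : ∑ i ∈ Finset.univ.erase i₀, r' i = ∑ i ∈ Finset.univ.erase i₀, r i :=
        Finset.sum_congr rfl fun i hi => hr'i i (Finset.ne_of_mem_erase hi)
      omega
    obtain ⟨l, d, hl, hd, hfact⟩ :=
      IH (∑ i, r' i) (lt_of_lt_of_le hsum' hN) C' hUC' le_rfl
    obtain ⟨lV, hlV, hlVp⟩ := LS_prod_one_add i₀ (fun i => -(c i))
      (Finset.univ.erase i₀) (fun i hi => Finset.ne_of_mem_erase hi)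
    have hVeq : lV.prod = 1 - T := by
      rw [hlVp, hT, sub_eq_add_neg, ← Finset.sum_neg_distrib]
      congr 1
      exact Finset.sum_congr rfl fun i _ => LS_std_neg i₀ i (c i)
    refine ⟨lV ++ l, d, ?_, hd, ?_⟩
    · intro M hM
      rcases List.mem_append.mp hM with h | h
      · exact hlV M h
      · exact hl M h
    · have h8 : C = (1 - T) * C' := by
        rw [hC'def, ← Matrix.mul_assoc, hVW, Matrix.one_mul]
      rw [h8, hfact, ← Matrix.mul_assoc, ← hVeq, ← List.prod_append]

end Main

section Atoms
variable {F : Type*} [Field F] {m : ℕ}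

noncomputable def LSfactor {F : Type*} [Field F] {m : ℕ} (x : Fin m × Fin m × F × ℕ) :
    Matrix (Fin m) (Fin m) F[X] :=
  if x.2.2.2 = 0 then
    1 + Matrix.single x.1 x.2.1 (Polynomial.C x.2.2.1)
  else
    1 - Matrix.single x.1 x.2.1 (Polynomial.C x.2.2.1)
      + Matrix.single x.1 x.2.1 (Polynomial.C x.2.2.1 * (X : F[X]) ^ x.2.2.2)



lemma LS_atom_mono {i j : Fin m} (hij : i ≠ j) (a : F) (k : ℕ) :
    (((if k = 0 then [(i, j, a, 0)] else [(i, j, a, 0), (i, j, a, k)]) :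
        List (Fin m × Fin m × F × ℕ)).map LSfactor).prod
      = 1 + single i j (Polynomial.C a * (X : F[X]) ^ k) := by
  rcases Nat.eq_zero_or_pos k with rfl | hk
  · simp [LSfactor]
  · rw [if_neg (Nat.pos_iff_ne_zero.mp hk)]
    have hk0 : k ≠ 0 := Nat.pos_iff_ne_zero.mp hk
    simp only [List.map_cons, List.map_nil, List.prod_cons, List.prod_nil, mul_one]
    rw [LSfactor, LSfactor, if_pos rfl, if_neg hk0]
    set S := single i j (Polynomial.C a) with hS
    set Q := single i j (Polynomial.C a * (X : F[X]) ^ k) with hQ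
    have h1 : (1 + S) * (1 - S + Q) = (1 + S) * (1 - S) + (Q + S * Q) := by noncomm_ring
    rw [h1, LS_unit_pair hij, hS, hQ, LS_std_mul_zero (Ne.symm hij), add_zero]
-- goal now should be 1 + Q = 1 + Q? check

lemma LS_poly_atoms {i j : Fin m} (hij : i ≠ j) (p : F[X]) :
    ∃ al : List (Fin m × Fin m × F × ℕ),
      (∀ x ∈ al, x.1 ≠ x.2.1 ∧ x.2.2.1 ≠ 0) ∧
      (al.map LSfactor).prod = 1 + single i j p := by
  have main : ∀ s : Finset ℕ, (∀ k ∈ s, p.coeff k ≠ 0) →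
      ∃ al : List (Fin m × Fin m × F × ℕ),
        (∀ x ∈ al, x.1 ≠ x.2.1 ∧ x.2.2.1 ≠ 0) ∧
        (al.map LSfactor).prod
          = 1 + single i j (∑ k ∈ s, Polynomial.C (p.coeff k) * (X : F[X]) ^ k) := by
    intro s
    induction s using Finset.induction_on with
    | empty => exact fun _ => ⟨[], by simp, by simp⟩
    | @insert k s hk IHs =>
      intro hs
      obtain ⟨al, hal, halp⟩ := IHs (fun k' hk' => hs k' (Finset.mem_insert_of_mem hk'))
      have hck : p.coeff k ≠ 0 := hs k (Finset.mem_insert_self k s)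
      refine ⟨(if k = 0 then [(i, j, p.coeff k, 0)] else [(i, j, p.coeff k, 0), (i, j, p.coeff k, k)]) ++ al, ?_, ?_⟩
      · intro x hx
        rcases List.mem_append.mp hx with h | h
        · have : x = (i, j, p.coeff k, 0) ∨ x = (i, j, p.coeff k, k) := by
            rcases Nat.eq_zero_or_pos k with rfl | hkpos
            · rw [if_pos rfl] at h
              exact Or.inl (List.mem_singleton.mp h)
            · rw [if_neg (Nat.pos_iff_ne_zero.mp hkpos)] at h
              rcases List.mem_cons.mp h with h' | h'
              · exact Or.inl h'
              · exact Or.inr (List.mem_singleton.mp h')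
          rcases this with rfl | rfl <;> exact ⟨hij, hck⟩
        · exact hal x h
      · rw [List.map_append, List.prod_append, LS_atom_mono hij, halp,
          LS_trans_mul_trans hij, Finset.sum_insert hk]
  obtain ⟨al, hal, halp⟩ := main p.support (fun k hk => mem_support_iff.mp hk)
  have hps : (∑ k ∈ p.support, Polynomial.C (p.coeff k) * (X : F[X]) ^ k) = p := by
    conv_rhs => rw [p.as_sum_support]
    exact Finset.sum_congr rfl fun k _ => C_mul_X_pow_eq_monomial
  refine ⟨al, hal, ?_⟩
  rw [halp, hps]

lemma LS_list_atoms : ∀ l : List (Matrix (Fin m) (Fin m) F[X]),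
    (∀ M ∈ l, ∃ i j p, i ≠ j ∧ M = 1 + single i j p) →
    ∃ al : List (Fin m × Fin m × F × ℕ),
      (∀ x ∈ al, x.1 ≠ x.2.1 ∧ x.2.2.1 ≠ 0) ∧
      (al.map LSfactor).prod = l.prod := by
  intro l
  induction l with
  | nil => exact fun _ => ⟨[], by simp, by simp⟩
  | cons M l IHl =>
    intro hl
    obtain ⟨al, hal, halp⟩ := IHl (fun M' hM' => hl M' (List.mem_cons_of_mem _ hM'))
    obtain ⟨i, j, p, hij, rfl⟩ := hl _ (List.mem_cons_self)
    obtain ⟨al', hal', halp'⟩ := LS_poly_atoms hij p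
    refine ⟨al' ++ al, ?_, ?_⟩
    · intro x hx
      rcases List.mem_append.mp hx with h | h
      · exact hal' x h
      · exact hal x h
    · rw [List.map_append, List.prod_append, halp, halp', List.prod_cons]

end Atoms

section Eval
variable {F : Type*} [Field F] {m : ℕ}

/-- evaluation at 1 of a product of elementary factors only sees the `k = 0` factors -/
lemma LS_eval_prod {r : ℕ} (iF jF : Fin r → Fin m) (aF : Fin r → F) (kF : Fin r → ℕ) :
    ∀ s : List (Fin r),
      ((s.map (fun t =>
          if kF t = 0 then
            (1 : Matrix (Fin m) (Fin m) F[X])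
              + Matrix.single (iF t) (jF t) (Polynomial.C (aF t))
          else
            (1 : Matrix (Fin m) (Fin m) F[X])
              - Matrix.single (iF t) (jF t) (Polynomial.C (aF t))
              + Matrix.single (iF t) (jF t)
                  (Polynomial.C (aF t) * (X : F[X]) ^ (kF t)))).prod).map (Polynomial.eval (1 : F))
      = ((s.filter (fun t => kF t = 0)).map (fun t =>
          (1 : Matrix (Fin m) (Fin m) F) + Matrix.single (iF t) (jF t) (aF t))).prod := by
  intro s
  have hφ : ∀ M : Matrix (Fin m) (Fin m) F[X],
      M.map (Polynomial.eval (1 : F)) = (RingHom.mapMatrix (evalRingHom (1 : F))) M :=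
    fun _ => rfl
  induction s with
  | nil => simp
  | cons t s IHs =>
    rw [List.map_cons, List.prod_cons, hφ, _root_.map_mul, ← hφ, ← hφ, IHs, List.filter_cons]
    by_cases hk : kF t = 0
    · rw [if_pos hk, if_pos (by simpa using hk), List.map_cons, List.prod_cons]
      congr 1
      have : ((1 : Matrix (Fin m) (Fin m) F[X])
          + Matrix.single (iF t) (jF t) (Polynomial.C (aF t))).map (Polynomial.eval (1 : F))
          = (RingHom.mapMatrix (evalRingHom (1 : F)))
            (1 + Matrix.single (iF t) (jF t) (Polynomial.C (aF t))) := rfl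
      rw [this, _root_.map_add, _root_.map_one, RingHom.mapMatrix_apply, LS_map_std]
      simp
    · rw [if_neg hk, if_neg (by simpa using hk)]
      have : ((1 : Matrix (Fin m) (Fin m) F[X])
          - Matrix.single (iF t) (jF t) (Polynomial.C (aF t))
          + Matrix.single (iF t) (jF t)
              (Polynomial.C (aF t) * (X : F[X]) ^ (kF t))).map (Polynomial.eval (1 : F))
          = (RingHom.mapMatrix (evalRingHom (1 : F)))
            (1 - Matrix.single (iF t) (jF t) (Polynomial.C (aF t))
              + Matrix.single (iF t) (jF t)
                  (Polynomial.C (aF t) * (X : F[X]) ^ (kF t))) := rfl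
      rw [this, _root_.map_add, _root_.map_sub, _root_.map_one, RingHom.mapMatrix_apply,
        RingHom.mapMatrix_apply, LS_map_std, LS_map_std]
      simp

/-- `Polynomial.C` of a product of constant transvections -/
lemma LS_mapC_prod {r : ℕ} (iF jF : Fin r → Fin m) (aF : Fin r → F) :
    ∀ s : List (Fin r),
      ((s.map (fun t =>
          (1 : Matrix (Fin m) (Fin m) F) + Matrix.single (iF t) (jF t) (aF t))).prod).map
            (Polynomial.C : F → F[X])
      = (s.map (fun t =>
          (1 : Matrix (Fin m) (Fin m) F[X])
            + Matrix.single (iF t) (jF t) (Polynomial.C (aF t)))).prod := by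
  intro s
  have h1 : ((s.map (fun t =>
      (1 : Matrix (Fin m) (Fin m) F) + Matrix.single (iF t) (jF t) (aF t))).prod).map
        (Polynomial.C : F → F[X])
      = (RingHom.mapMatrix (Polynomial.C : F →+* F[X]))
        ((s.map (fun t => (1 : Matrix (Fin m) (Fin m) F)
          + Matrix.single (iF t) (jF t) (aF t))).prod) := rfl
  rw [h1, map_list_prod, List.map_map]
  refine congrArg List.prod (List.map_congr_left fun t _ => ?_)
  show (RingHom.mapMatrix (Polynomial.C : F →+* F[X]))
      (1 + Matrix.single (iF t) (jF t) (aF t)) = _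
  rw [_root_.map_add, _root_.map_one, RingHom.mapMatrix_apply, LS_map_std]

lemma LS_isUnit_list_prod {R : Type*} [Monoid R] :
    ∀ l : List R, (∀ M ∈ l, IsUnit M) → IsUnit l.prod := by
  intro l
  induction l with
  | nil => simp
  | cons M l IHl =>
    intro hl
    rw [List.prod_cons]
    exact (hl M (List.mem_cons_self)).mul (IHl fun M' h => hl M' (List.mem_cons_of_mem _ h))

end Eval

section Helpers
variable {F : Type*} [Field F] {m : ℕ}

lemma LS_std_sub {n : Type*} [DecidableEq n] {R : Type*} [Ring R] (i j : n) (a b : R) :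
    single i j (a - b) = single i j a - single i j b := by
  rw [sub_eq_add_neg, single_add, LS_std_neg, ← sub_eq_add_neg]

lemma LS_det_list {n : Type*} [DecidableEq n] [Fintype n] {R : Type*} [CommRing R] :
    ∀ l : List (Matrix n n R), (∀ M ∈ l, M.det = 1) → l.prod.det = 1 := by
  intro l
  induction l with
  | nil => simp
  | cons M l IHl =>
    intro hl
    rw [List.prod_cons, Matrix.det_mul, hl M (List.mem_cons_self),
      IHl (fun M' h => hl M' (List.mem_cons_of_mem _ h)), one_mul]

lemma LS_isUnit_factor {i j : Fin m} (hij : i ≠ j) (a : F) (k : ℕ) :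
    IsUnit ((1 : Matrix (Fin m) (Fin m) F[X])
      - Matrix.single i j (Polynomial.C a)
      + Matrix.single i j (Polynomial.C a * (X : F[X]) ^ k)) := by
  have h9 : (1 : Matrix (Fin m) (Fin m) F[X])
      - Matrix.single i j (Polynomial.C a)
      + Matrix.single i j (Polynomial.C a * (X : F[X]) ^ k)
      = 1 + Matrix.single i j (Polynomial.C a * (X : F[X]) ^ k - Polynomial.C a) := by
    rw [LS_std_sub]; abel
  rw [h9]
  exact LS_isUnit_trans hij _
end Helpers

/-- The lattice-structure characterization (Theorem 5.1, without the genus bound):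
`C` is (the `t = z⁻¹` form of) a pseudoidentity matrix if and only if it is a product
of elementary factors `E_s` (constant transvections for `k_s = 0`, primitive factors
`I_m − a_s·E_{i_s j_s} + a_s·E_{i_s j_s}·X^{k_s}` for `k_s ≥ 1`) times a constant
diagonal matrix `C′` of determinant `1`, where the product of the `k_s = 0` factors
(in the same relative order) times `C′` equals `I_m`. -/
theorem lattice_structure {F : Type*} [Field F] {m : ℕ} (hm : 2 ≤ m)
    (C : Matrix (Fin m) (Fin m) F[X]) :
    ((∃ E : Matrix (Fin m) (Fin m) F[X], C * E = 1) ∧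
      C.map (Polynomial.eval (1 : F)) = 1) ↔
    ∃ (r : ℕ) (i j : Fin r → Fin m) (a : Fin r → F) (k : Fin r → ℕ) (d : Fin m → F),
      (∀ s, i s ≠ j s) ∧ (∀ s, a s ≠ 0) ∧
      (Matrix.diagonal d).det = 1 ∧
      C = ((((List.finRange r).reverse).map (fun s =>
          if k s = 0 then
            (1 : Matrix (Fin m) (Fin m) F[X])
              + Matrix.single (i s) (j s) (Polynomial.C (a s))
          else
            (1 : Matrix (Fin m) (Fin m) F[X])
              - Matrix.single (i s) (j s) (Polynomial.C (a s))
              + Matrix.single (i s) (j s)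
                  (Polynomial.C (a s) * (X : F[X]) ^ (k s)))).prod) *
        ((Matrix.diagonal d).map Polynomial.C) ∧
      (((((List.finRange r).reverse).filter (fun s => k s = 0)).map (fun s =>
          (1 : Matrix (Fin m) (Fin m) F[X])
            + Matrix.single (i s) (j s) (Polynomial.C (a s)))).prod) *
        ((Matrix.diagonal d).map Polynomial.C) = 1 := by
  have hφ : ∀ M : Matrix (Fin m) (Fin m) F[X],
      M.map (Polynomial.eval (1 : F)) = (RingHom.mapMatrix (evalRingHom (1 : F))) M :=
    fun _ => rfl
  have hψ : ∀ M : Matrix (Fin m) (Fin m) F,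
      M.map (Polynomial.C : F → F[X]) = (RingHom.mapMatrix (Polynomial.C : F →+* F[X])) M :=
    fun _ => rfl
  have hDmap : ∀ d : Fin m → F,
      ((Matrix.diagonal d).map (Polynomial.C : F → F[X])).map (Polynomial.eval (1 : F))
        = Matrix.diagonal d := by
    intro d
    rw [Matrix.map_map]
    have : (Polynomial.eval (1 : F)) ∘ (Polynomial.C : F → F[X]) = id := by
      funext x; simp
    rw [this, Matrix.map_id]
  constructor
  · rintro ⟨⟨E, hE⟩, h1⟩
    have hU : IsUnit C := ⟨⟨C, E, hE, mul_eq_one_comm.mp hE⟩, rfl⟩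
    obtain ⟨l, d, hl, hd, hfact⟩ := LS_main _ C hU le_rfl
    obtain ⟨al, hal, halp⟩ := LS_list_atoms l hl
    set l' := al.reverse with hl'
    set rr := l'.length with hrr
    set iF : Fin rr → Fin m := fun s => (l'.get s).1 with hiF
    set jF : Fin rr → Fin m := fun s => (l'.get s).2.1 with hjF
    set aF : Fin rr → F := fun s => (l'.get s).2.2.1 with haF
    set kF : Fin rr → ℕ := fun s => (l'.get s).2.2.2 with hkF
    have hmem : ∀ s : Fin rr, l'.get s ∈ al := fun s =>
      List.mem_reverse.mp (List.get_mem l' s)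
    have hfun : (fun s =>
        if kF s = 0 then
          (1 : Matrix (Fin m) (Fin m) F[X])
            + Matrix.single (iF s) (jF s) (Polynomial.C (aF s))
        else
          (1 : Matrix (Fin m) (Fin m) F[X])
            - Matrix.single (iF s) (jF s) (Polynomial.C (aF s))
            + Matrix.single (iF s) (jF s)
                (Polynomial.C (aF s) * (X : F[X]) ^ (kF s)))
        = fun s => LSfactor (l'.get s) := by
      funext s
      simp only [LSfactor, hiF, hjF, haF, hkF]
    have hlist : ((List.finRange rr).reverse).map (fun s => LSfactor (l'.get s))
        = al.map LSfactor := by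
      have h1' : (List.finRange rr).map (fun s => LSfactor (l'.get s)) = l'.map LSfactor := by
        rw [show (fun s => LSfactor (l'.get s)) = LSfactor ∘ l'.get from rfl,
          ← List.map_map, List.map_get_finRange]
      rw [List.map_reverse, h1', ← List.map_reverse, hl', List.reverse_reverse]
    have hCP : C = (((List.finRange rr).reverse).map (fun s => LSfactor (l'.get s))).prod
        * (Matrix.diagonal d).map Polynomial.C := by
      rw [hlist, halp, hfact]
    -- the filter condition over F
    have hQF : ((((List.finRange rr).reverse).filter (fun s => kF s = 0)).map (fun t =>
          (1 : Matrix (Fin m) (Fin m) F) + Matrix.single (iF t) (jF t) (aF t))).prod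
        * Matrix.diagonal d = 1 := by
      have h2 := LS_eval_prod iF jF aF kF ((List.finRange rr).reverse)
      rw [← hfun] at hCP
      have h3 : C.map (Polynomial.eval (1 : F)) =
          ((((List.finRange rr).reverse).filter (fun s => kF s = 0)).map (fun t =>
            (1 : Matrix (Fin m) (Fin m) F) + Matrix.single (iF t) (jF t) (aF t))).prod
          * Matrix.diagonal d := by
        rw [hCP, hφ, _root_.map_mul, ← hφ, ← hφ, h2, hDmap]
      rw [← h3, h1]
    have hdet1 : (Matrix.diagonal d).det = 1 := by
      have h4 := congrArg Matrix.det hQF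
      rw [Matrix.det_mul, Matrix.det_one] at h4
      have h5 : ((((List.finRange rr).reverse).filter (fun s => kF s = 0)).map (fun t =>
          (1 : Matrix (Fin m) (Fin m) F) + Matrix.single (iF t) (jF t) (aF t))).prod.det
          = 1 := by
        refine LS_det_list _ fun M hM => ?_
        obtain ⟨t, _, rfl⟩ := List.mem_map.mp hM
        exact Matrix.det_transvection_of_ne _ _ ((hal _ (hmem t)).1) _
      rw [h5, one_mul] at h4
      exact h4
    refine ⟨rr, iF, jF, aF, kF, d, fun s => (hal _ (hmem s)).1, fun s => (hal _ (hmem s)).2,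
      hdet1, ?_, ?_⟩
    · rw [hfun]; exact hCP
    · rw [← LS_mapC_prod iF jF aF, hψ, hψ, ← _root_.map_mul, hQF, _root_.map_one]
  · rintro ⟨rr, iF, jF, aF, kF, d, hij, ha, hdet, hfact, hcond⟩
    have hdiagdet : ((Matrix.diagonal d).map (Polynomial.C : F → F[X])).det = 1 := by
      rw [hψ, ← RingHom.map_det, hdet, _root_.map_one]
    have hUD : IsUnit ((Matrix.diagonal d).map (Polynomial.C : F → F[X])) := by
      rw [Matrix.isUnit_iff_isUnit_det, hdiagdet]
      exact isUnit_one
    have hUP : IsUnit ((((List.finRange rr).reverse).map (fun s =>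
        if kF s = 0 then
          (1 : Matrix (Fin m) (Fin m) F[X])
            + Matrix.single (iF s) (jF s) (Polynomial.C (aF s))
        else
          (1 : Matrix (Fin m) (Fin m) F[X])
            - Matrix.single (iF s) (jF s) (Polynomial.C (aF s))
            + Matrix.single (iF s) (jF s)
                (Polynomial.C (aF s) * (X : F[X]) ^ (kF s)))).prod) := by
      refine LS_isUnit_list_prod _ fun M hM => ?_
      obtain ⟨t, _, rfl⟩ := List.mem_map.mp hM
      by_cases hk : kF t = 0
      · rw [if_pos hk]
        exact LS_isUnit_trans (hij t) _
      · rw [if_neg hk]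
        exact LS_isUnit_factor (hij t) (aF t) (kF t)
    constructor
    · obtain ⟨u, hu⟩ := hfact ▸ (hUP.mul hUD)
      exact ⟨↑u⁻¹, by rw [← hu, Units.mul_inv]⟩
    · rw [hfact, hφ, _root_.map_mul, ← hφ, ← hφ, LS_eval_prod iF jF aF kF, hDmap]
      have h6 : (((((List.finRange rr).reverse).filter (fun s => kF s = 0)).map (fun s =>
            (1 : Matrix (Fin m) (Fin m) F[X])
              + Matrix.single (iF s) (jF s) (Polynomial.C (aF s)))).prod
          * ((Matrix.diagonal d).map Polynomial.C)).map (Polynomial.eval (1 : F)) = 1 := by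
        rw [hcond, hφ, _root_.map_one]
      rw [hφ, _root_.map_mul, ← hφ, ← hφ, ← LS_mapC_prod iF jF aF, hDmap] at h6
      rw [Matrix.map_map] at h6
      have h7 : (Polynomial.eval (1 : F)) ∘ (Polynomial.C : F → F[X]) = id := by
        funext x; simp
      rw [h7, Matrix.map_id] at h6
      exact h6
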